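/- Let T be a Borel subset of [0,1] and {X(t)}_{t∈T} random elements of a metric space (S,d) with t ↦ X(ω,t) right-continuous on T for every ω. Suppose there are α > 1/2, β ≥ 0 and a finite measure μ on T such that for all λ > 0 and r ≤ s ≤ t in T, P(min(d(X(r),X(s)), d(X(s),X(t))) ≥ λ) ≤ λ^{−4β} (μ(T ∩ (r,t]))^{2α}. Then there is a constant K = K(α,β) such that P(sup_{r≤s≤t, r,s,t∈T} min(d(X(r),X(s)), d(X(s),X(t))) > λ) ≤ K λ^{−4β} μ(T)^{2α} for all λ > 0. -/

import Mathlib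

open Set Filter

noncomputable section

/-- Sup norm over `[0,1]`. -/
def unorm (x : ℝ → ℝ) : ℝ := sSup ((fun s => |x s|) '' Icc 0 1)

/-- Càdlàg (right-continuous with left limits) on `[0,1]`. -/
def Cadlag (x : ℝ → ℝ) : Prop :=
  (∀ t ∈ Ico (0:ℝ) 1, Filter.Tendsto x (nhdsWithin t (Ioc t 1)) (nhds (x t))) ∧
  (∀ t ∈ Ioc (0:ℝ) 1, ∃ L : ℝ, Filter.Tendsto x (nhdsWithin t (Ico 0 t)) (nhds L))

/-- Strictly increasing continuous bijection of `[0,1]` onto itself. -/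
def TimeChange (l : ℝ → ℝ) : Prop :=
  ContinuousOn l (Icc 0 1) ∧ StrictMonoOn l (Icc 0 1) ∧ l '' Icc 0 1 = Icc 0 1

/-- Billingsley's metric `d_{J1}°` on the Skorohod space, written as the infimum of all
`r` dominating both `‖λ‖°` and `‖x - y ∘ λ‖` for some time change `λ`. -/
def dJ (x y : ℝ → ℝ) : ℝ :=
  sInf { r : ℝ | ∃ l, TimeChange l ∧
    (∀ s ∈ Icc (0:ℝ) 1, ∀ s' ∈ Icc (0:ℝ) 1, s < s' →
      |Real.log ((l s' - l s) / (s' - s))| ≤ r) ∧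
    (∀ s ∈ Icc (0:ℝ) 1, |x s - y (l s)| ≤ r) }

/-- The classical Skorohod metric `d_{J1}`. -/
def dJ1 (x y : ℝ → ℝ) : ℝ :=
  sInf { r : ℝ | ∃ l, TimeChange l ∧
    (∀ s ∈ Icc (0:ℝ) 1, |l s - s| ≤ r) ∧
    (∀ s ∈ Icc (0:ℝ) 1, |x s - y (l s)| ≤ r) }

/-- `L` is the left limit (w.r.t. `d_{J1}°`) of the `D`-valued path `X` at `t`. -/
def LeftLimAt (X : ℝ → ℝ → ℝ) (t : ℝ) (L : ℝ → ℝ) : Prop :=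
  Cadlag L ∧ ∀ ε > 0, ∃ δ > 0, ∀ u, max 0 (t - δ) ≤ u → u < t → dJ (X u) L < ε

/-- `X ∈ D([0,1];D)`: `D`-valued, right-continuous with left limits w.r.t. `J₁`. -/
def CadlagD (X : ℝ → ℝ → ℝ) : Prop :=
  (∀ t ∈ Icc (0:ℝ) 1, Cadlag (X t)) ∧
  (∀ t ∈ Ico (0:ℝ) 1, ∀ ε > 0, ∃ δ > 0, ∀ u, t ≤ u → u ≤ min 1 (t + δ) → dJ (X u) (X t) < ε) ∧
  (∀ t ∈ Ioc (0:ℝ) 1, ∃ L, LeftLimAt X t L)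

/-- Super-uniform norm on `D([0,1];D)`. -/
def dnorm (X : ℝ → ℝ → ℝ) : ℝ := sSup ((fun t => unorm (X t)) '' Icc 0 1)

/-- Uniform distance `ρ_D` on `D([0,1];D)`. -/
def rhoD (X Y : ℝ → ℝ → ℝ) : ℝ := sSup ((fun t => dJ (X t) (Y t)) '' Icc 0 1)

/-- Skorohod distance `d_D` on `D([0,1];D)`. -/
def dD (X Y : ℝ → ℝ → ℝ) : ℝ :=
  sInf { r : ℝ | ∃ l, TimeChange l ∧ (∀ t ∈ Icc (0:ℝ) 1, |l t - t| ≤ r) ∧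
    (∀ t ∈ Icc (0:ℝ) 1, dJ (X t) (Y (l t)) ≤ r) }

/-- Oscillation `w_D(x,T)` of a `D`-valued path on a time set `T`. -/
def wD (X : ℝ → ℝ → ℝ) (T : Set ℝ) : ℝ :=
  sSup ((fun p : ℝ × ℝ => dJ (X p.1) (X p.2)) '' (T ×ˢ T))

/-- A finite partition `0 = t 0 < t 1 < ... < t v = 1`. -/
def IsPartition (t : ℕ → ℝ) (v : ℕ) : Prop :=
  0 < v ∧ t 0 = 0 ∧ t v = 1 ∧ ∀ i < v, t i < t (i + 1)

/-- The partition is `δ`-sparse: all mesh lengths exceed `δ`. -/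
def Sparse (δ : ℝ) (t : ℕ → ℝ) (v : ℕ) : Prop := ∀ i < v, δ < t (i + 1) - t i

/-- Modulus `w'_D(x,δ)`: infimum over `δ`-sparse partitions of the max oscillation. -/
def wD' (X : ℝ → ℝ → ℝ) (δ : ℝ) : ℝ :=
  sInf { r : ℝ | ∃ t v, IsPartition t v ∧ Sparse δ t v ∧
    ∀ i < v, wD X (Ico (t i) (t (i + 1))) ≤ r }

/-- Modulus `w''_D(x,δ)`. -/
def wD'' (X : ℝ → ℝ → ℝ) (δ : ℝ) : ℝ :=
  sSup ((fun p : ℝ × ℝ × ℝ => min (dJ (X p.2.1) (X p.1)) (dJ (X p.2.2) (X p.2.1))) ''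
    {p : ℝ × ℝ × ℝ | 0 ≤ p.1 ∧ p.1 ≤ p.2.1 ∧ p.2.1 ≤ p.2.2 ∧ p.2.2 ≤ 1 ∧ p.2.2 - p.1 ≤ δ})

/-- Oscillation of a real càdlàg function on a set `T ⊆ [0,1]`. -/
def wR (y : ℝ → ℝ) (T : Set ℝ) : ℝ := sSup ((fun p : ℝ × ℝ => |y p.1 - y p.2|) '' (T ×ˢ T))

/-- Billingsley's modulus `w'(y,δ)` for real càdlàg functions. -/
def wR' (y : ℝ → ℝ) (δ : ℝ) : ℝ :=
  sInf { r : ℝ | ∃ t v, IsPartition t v ∧ Sparse δ t v ∧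
    ∀ i < v, wR y (Ico (t i) (t (i + 1))) ≤ r }

/-- Modulus `w_D(x,δ) = sup_{|t₁-t₂| ≤ δ} d_{J1}°(x(t₁),x(t₂))`. -/
def wDmod (X : ℝ → ℝ → ℝ) (δ : ℝ) : ℝ :=
  sSup ((fun p : ℝ × ℝ => dJ (X p.1) (X p.2)) ''
    {p : ℝ × ℝ | p.1 ∈ Icc (0:ℝ) 1 ∧ p.2 ∈ Icc (0:ℝ) 1 ∧ |p.1 - p.2| ≤ δ})

/-- Maximum jump `j(x) = sup_t d_{J1}°(x(t),x(t-))`. -/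
def jmax (X : ℝ → ℝ → ℝ) : ℝ :=
  sSup {d : ℝ | ∃ t ∈ Ioc (0:ℝ) 1, ∃ L, LeftLimAt X t L ∧ d = dJ (X t) L}

set_option maxHeartbeats 1000000
section Stmt19AuxSection
namespace Stmt19Aux
open MeasureTheory


/-- mass of `T ∩ (x,y]`. -/
def sUU (μ : Measure ℝ) (T : Set ℝ) (x y : ℝ) : ℝ := (μ (T ∩ Set.Ioc x y)).toReal

lemma sUU_nonneg (μ : Measure ℝ) (T : Set ℝ) (x y : ℝ) : 0 ≤ sUU μ T x y :=
  ENNReal.toReal_nonneg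

lemma sUU_self (μ : Measure ℝ) (T : Set ℝ) (x : ℝ) : sUU μ T x x = 0 := by
  simp [sUU]

variable {μ : Measure ℝ} [IsFiniteMeasure μ] {T : Set ℝ}

lemma sUU_mono_left {a a' y : ℝ} (h : a ≤ a') : sUU μ T a' y ≤ sUU μ T a y := by
  refine ENNReal.toReal_mono (measure_ne_top _ _) (measure_mono ?_)
  exact inter_subset_inter_right _ (Ioc_subset_Ioc_left h)

lemma sUU_mono_right {a y y' : ℝ} (h : y ≤ y') : sUU μ T a y ≤ sUU μ T a y' := by
  refine ENNReal.toReal_mono (measure_ne_top _ _) (measure_mono ?_)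
  exact inter_subset_inter_right _ (Ioc_subset_Ioc_right h)

lemma sUU_le_total (a y : ℝ) : sUU μ T a y ≤ (μ T).toReal := by
  refine ENNReal.toReal_mono (measure_ne_top _ _) (measure_mono inter_subset_left)

lemma sUU_add (hT : MeasurableSet T) {a b c : ℝ} (hab : a ≤ b) (hbc : b ≤ c) :
    sUU μ T a b + sUU μ T b c = sUU μ T a c := by
  unfold sUU
  rw [← ENNReal.toReal_add (measure_ne_top _ _) (measure_ne_top _ _), ← measure_union ?_ ?_]
  · rw [← inter_union_distrib_left, Ioc_union_Ioc_eq_Ioc hab hbc]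
  · refine Disjoint.mono inter_subset_right inter_subset_right ?_
    rw [Set.disjoint_left]
    rintro x ⟨_, h1⟩ ⟨h2, _⟩
    exact absurd (h2.trans_le h1) (lt_irrefl _)
  · exact hT.inter measurableSet_Ioc

/-- median split of a finite chain. -/
lemma split_ex (hT : MeasurableSet T) (J : Finset ℝ) (hc : 2 ≤ J.card) :
    ∃ B₁ B₂ : Finset ℝ, ∃ h₁ : B₁.Nonempty, ∃ h₂ : B₂.Nonempty, ∃ hne : J.Nonempty,
      B₁ ⊆ J ∧ B₂ ⊆ J ∧ (∀ x ∈ J, x ∈ B₁ ∨ x ∈ B₂) ∧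
      (∀ x ∈ B₁, ∀ y ∈ B₂, x < y) ∧
      B₁.card < J.card ∧ B₂.card < J.card ∧
      sUU μ T (B₁.min' h₁) (B₁.max' h₁) ≤ sUU μ T (J.min' hne) (J.max' hne) / 2 ∧
      sUU μ T (B₂.min' h₂) (B₂.max' h₂) ≤ sUU μ T (J.min' hne) (J.max' hne) / 2 := by
  classical
  have hne : J.Nonempty := Finset.card_pos.mp (by omega)
  set a := J.min' hne with ha
  set b := J.max' hne with hb
  set u := sUU μ T a b with hu
  have hu0 : 0 ≤ u := sUU_nonneg _ _ _ _
  set F := J.filter (fun x => u / 2 < sUU μ T a x) with hF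
  -- choose split point c
  by_cases hf : F.Nonempty
  · set c := F.min' hf with hcdef
    have hcF : c ∈ F := F.min'_mem hf
    have hcJ : c ∈ J := Finset.mem_filter.mp hcF |>.1
    have hcgt : u / 2 < sUU μ T a c := (Finset.mem_filter.mp hcF).2
    have haF : a ∉ F := by
      intro h
      have := (Finset.mem_filter.mp h).2
      rw [sUU_self] at this; linarith
    have hac : a < c := lt_of_le_of_ne (J.min'_le c hcJ) (fun h => haF (h ▸ hcF))
    refine ⟨J.filter (fun x => x < c), J.filter (fun x => ¬ x < c), ⟨a, ?_⟩, ⟨c, ?_⟩, hne,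
      Finset.filter_subset _ _, Finset.filter_subset _ _, ?_, ?_, ?_, ?_, ?_, ?_⟩
    · exact Finset.mem_filter.mpr ⟨J.min'_mem hne, hac⟩
    · exact Finset.mem_filter.mpr ⟨hcJ, lt_irrefl c⟩
    · intro x hx; by_cases h : x < c
      · exact Or.inl (Finset.mem_filter.mpr ⟨hx, h⟩)
      · exact Or.inr (Finset.mem_filter.mpr ⟨hx, h⟩)
    · intro x hx y hy
      exact lt_of_lt_of_le (Finset.mem_filter.mp hx).2 (not_lt.mp (Finset.mem_filter.mp hy).2)
    · refine Finset.card_lt_card ⟨Finset.filter_subset _ _, fun hsub => ?_⟩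
      have := Finset.mem_filter.mp (hsub hcJ)
      exact absurd this.2 (lt_irrefl c)
    · refine Finset.card_lt_card ⟨Finset.filter_subset _ _, fun hsub => ?_⟩
      have := Finset.mem_filter.mp (hsub (J.min'_mem hne))
      exact this.2 hac
    · -- left block mass
      set B₁ := J.filter (fun x => x < c)
      have h₁ : B₁.Nonempty := ⟨a, Finset.mem_filter.mpr ⟨J.min'_mem hne, hac⟩⟩
      have hx₁ : B₁.max' h₁ ∈ B₁ := B₁.max'_mem h₁
      have hx₁J : B₁.max' h₁ ∈ J := (Finset.filter_subset _ _) hx₁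
      have hx₁c : B₁.max' h₁ < c := (Finset.mem_filter.mp hx₁).2
      have hnotF : B₁.max' h₁ ∉ F := fun h => absurd (F.min'_le _ h) (not_le.mpr hx₁c)
      have hle : sUU μ T a (B₁.max' h₁) ≤ u / 2 := by
        by_contra h
        exact hnotF (Finset.mem_filter.mpr ⟨hx₁J, not_le.mp h⟩)
      exact le_trans (sUU_mono_left (J.min'_le _ ((Finset.filter_subset _ _) (B₁.min'_mem h₁)))) hle
    · -- right block mass
      set B₂ := J.filter (fun x => ¬ x < c)
      have h₂ : B₂.Nonempty := ⟨c, Finset.mem_filter.mpr ⟨hcJ, lt_irrefl c⟩⟩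
      have hmin : B₂.min' h₂ = c := by
        refine le_antisymm (B₂.min'_le c (Finset.mem_filter.mpr ⟨hcJ, lt_irrefl c⟩)) ?_
        exact Finset.le_min' _ _ _ (fun y hy => not_lt.mp (Finset.mem_filter.mp hy).2)
      have hmax : B₂.max' h₂ = b := by
        refine le_antisymm (Finset.max'_le _ _ _ (fun y hy => J.le_max' y ((Finset.filter_subset _ _) hy))) ?_
        refine Finset.le_max' _ b (Finset.mem_filter.mpr ⟨J.max'_mem hne, not_lt.mpr ?_⟩)
        exact J.le_max' c hcJ
      rw [hmin, hmax]
      have hcb : c ≤ b := J.le_max' c hcJ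
      have hadd : sUU μ T a c + sUU μ T c b = u := sUU_add hT hac.le hcb
      linarith
  · -- no point passes u/2 : split off the max
    have hnF : ∀ x ∈ J, sUU μ T a x ≤ u / 2 := by
      intro x hx
      by_contra h
      exact hf ⟨x, Finset.mem_filter.mpr ⟨hx, not_le.mp h⟩⟩
    have hab : a < b := J.min'_lt_max'_of_card (by omega)
    refine ⟨J.filter (fun x => x < b), J.filter (fun x => ¬ x < b), ⟨a, ?_⟩, ⟨b, ?_⟩, hne,
      Finset.filter_subset _ _, Finset.filter_subset _ _, ?_, ?_, ?_, ?_, ?_, ?_⟩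
    · exact Finset.mem_filter.mpr ⟨J.min'_mem hne, hab⟩
    · exact Finset.mem_filter.mpr ⟨J.max'_mem hne, lt_irrefl b⟩
    · intro x hx; by_cases h : x < b
      · exact Or.inl (Finset.mem_filter.mpr ⟨hx, h⟩)
      · exact Or.inr (Finset.mem_filter.mpr ⟨hx, h⟩)
    · intro x hx y hy
      exact lt_of_lt_of_le (Finset.mem_filter.mp hx).2 (not_lt.mp (Finset.mem_filter.mp hy).2)
    · refine Finset.card_lt_card ⟨Finset.filter_subset _ _, fun hsub => ?_⟩
      exact absurd (Finset.mem_filter.mp (hsub (J.max'_mem hne))).2 (lt_irrefl b)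
    · refine Finset.card_lt_card ⟨Finset.filter_subset _ _, fun hsub => ?_⟩
      exact (Finset.mem_filter.mp (hsub (J.min'_mem hne))).2 hab
    · set B₁ := J.filter (fun x => x < b)
      have h₁ : B₁.Nonempty := ⟨a, Finset.mem_filter.mpr ⟨J.min'_mem hne, hab⟩⟩
      refine le_trans (sUU_mono_left (J.min'_le _ ((Finset.filter_subset _ _) (B₁.min'_mem h₁)))) ?_
      exact hnF _ ((Finset.filter_subset _ _) (B₁.max'_mem h₁))
    · set B₂ := J.filter (fun x => ¬ x < b)
      have h₂ : B₂.Nonempty := ⟨b, Finset.mem_filter.mpr ⟨J.max'_mem hne, lt_irrefl b⟩⟩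
      have hB2 : ∀ y ∈ B₂, y = b := by
        intro y hy
        have h := Finset.mem_filter.mp hy
        exact le_antisymm (J.le_max' y h.1) (not_lt.mp h.2)
      have hmin : B₂.min' h₂ = b := hB2 _ (B₂.min'_mem h₂)
      have hmax : B₂.max' h₂ = b := hB2 _ (B₂.max'_mem h₂)
      rw [hmin, hmax, sUU_self]
      linarith


abbrev Entry := Finset ℝ × ℝ × ℝ

variable {Ω : Type} [MeasurableSpace Ω] {S : Type} [MetricSpace S]

def sTri (X : ℝ → Ω → S) (x y z lam : ℝ) : Set Ω :=
  {ω | x ≤ y ∧ y ≤ z ∧ lam ≤ min (dist (X x ω) (X y ω)) (dist (X y ω) (X z ω))}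

def sEv (X : ℝ → Ω → S) (J : Finset ℝ) (lam : ℝ) : Set Ω :=
  {ω | ∃ x ∈ J, ∃ y ∈ J, ∃ z ∈ J, x ≤ y ∧ y ≤ z ∧
    lam ≤ min (dist (X x ω) (X y ω)) (dist (X y ω) (X z ω))}

def poles (Bs : List Entry) : List ℝ := Bs.flatMap (fun e => [e.2.1, e.2.2])

lemma claim {X : ℝ → Ω → S} {lam : ℝ} (hlam : 0 < lam) (Bs : List Entry) (J : Finset ℝ)
    (hprops : ∀ e ∈ Bs, e.2.1 ∈ e.1 ∧ e.2.2 ∈ e.1 ∧ (∀ x ∈ e.1, e.2.1 ≤ x ∧ x ≤ e.2.2))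
    (hcov : ∀ x ∈ J, ∃ e ∈ Bs, x ∈ e.1)
    (hsep : Bs.Pairwise (fun e e' => ∀ x ∈ e.1, ∀ y ∈ e'.1, x < y)) :
    sEv X J lam ⊆ (⋃ e ∈ Bs, sEv X e.1 (lam/4)) ∪
      (⋃ p ∈ poles Bs, ⋃ q ∈ poles Bs, ⋃ r ∈ poles Bs, sTri X p q r (lam/2)) := by
  intro ω hω
  by_contra hno
  rw [Set.mem_union, not_or] at hno
  obtain ⟨hnoA, hnoB⟩ := hno
  have hA : ∀ e ∈ Bs, ω ∉ sEv X e.1 (lam/4) := by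
    intro e he hmem
    exact hnoA (Set.mem_biUnion he hmem)
  have hB : ∀ p ∈ poles Bs, ∀ q ∈ poles Bs, ∀ r ∈ poles Bs, ω ∉ sTri X p q r (lam/2) := by
    intro p hp q hq r hr hmem
    exact hnoB (Set.mem_biUnion hp (Set.mem_biUnion hq (Set.mem_biUnion hr hmem)))
  -- separation in usable form
  have hsep' : ∀ e ∈ Bs, ∀ e' ∈ Bs, ∀ x ∈ e.1, ∀ y ∈ e'.1, x ≤ y →
      e = e' ∨ (∀ a ∈ e.1, ∀ b ∈ e'.1, a < b) := by
    intro e he e' he' x hx y hy hxy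
    by_cases heq : e = e'
    · exact Or.inl heq
    · have hpw : List.Pairwise
          (fun e e' => (∀ a ∈ e.1, ∀ b ∈ e'.1, a < b) ∨ (∀ a ∈ e'.1, ∀ b ∈ e.1, a < b)) Bs :=
        hsep.imp (fun h => Or.inl h)
      have hsym : Symmetric
          (fun (e e' : Entry) => (∀ a ∈ e.1, ∀ b ∈ e'.1, a < b) ∨ (∀ a ∈ e'.1, ∀ b ∈ e.1, a < b)) := by
        intro u v h
        exact h.symm
      rcases (haveI : Std.Symm _ := ⟨hsym⟩; hpw.forall he he' heq) with h | h
      · exact Or.inr h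
      · exact absurd (h y hy x hx) (not_lt.mpr hxy)
  -- attachment of every point of a block to one of its poles
  have hatt : ∀ e ∈ Bs, ∀ w ∈ e.1, ∃ p, (p = e.2.1 ∨ p = e.2.2) ∧
      dist (X w ω) (X p ω) < lam/4 := by
    intro e he w hw
    obtain ⟨ha, hb, hbd⟩ := hprops e he
    have h1 : ¬ (lam/4 ≤ min (dist (X e.2.1 ω) (X w ω)) (dist (X w ω) (X e.2.2 ω))) := by
      intro hc
      exact hA e he ⟨e.2.1, ha, w, hw, e.2.2, hb, (hbd w hw).1, (hbd w hw).2, hc⟩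
    rw [not_le, min_lt_iff] at h1
    rcases h1 with h | h
    · exact ⟨e.2.1, Or.inl rfl, by rwa [dist_comm] at h⟩
    · exact ⟨e.2.2, Or.inr rfl, h⟩
  -- key pair step
  have hpair : ∀ e ∈ Bs, ∀ e' ∈ Bs, ∀ x ∈ e.1, ∀ y ∈ e'.1, ∀ p p',
      (p = e.2.1 ∨ p = e.2.2) → (p' = e'.2.1 ∨ p' = e'.2.2) →
      dist (X x ω) (X p ω) < lam/4 → dist (X y ω) (X p' ω) < lam/4 →
      x ≤ y → lam ≤ dist (X x ω) (X y ω) →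
      p ≤ p' ∧ lam/2 ≤ dist (X p ω) (X p' ω) := by
    intro e he e' he' x hx y hy p p' hpor hpor' hdx hdy hxy hd
    obtain ⟨ha, hb, hbd⟩ := hprops e he
    obtain ⟨ha', hb', hbd'⟩ := hprops e' he'
    have hpmem : p ∈ e.1 := by rcases hpor with h | h <;> (subst h); exacts [ha, hb]
    have hpmem' : p' ∈ e'.1 := by rcases hpor' with h | h <;> (subst h); exacts [ha', hb']
    have htri : dist (X x ω) (X y ω) ≤
        dist (X x ω) (X p ω) + dist (X p ω) (X p' ω) + dist (X p' ω) (X y ω) :=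
      dist_triangle4 _ _ _ _
    have hdy' : dist (X p' ω) (X y ω) < lam/4 := by rwa [dist_comm] at hdy
    rcases hsep' e he e' he' x hx y hy hxy with heq | hlt
    · -- same block
      subst heq
      rcases hpor with hp1 | hp2
      · rcases hpor' with hq1 | hq2
        · -- both attached to the min pole : contradiction with lam ≤ dist x y
          exfalso
          subst hp1; subst hq1
          have h3 : dist (X x ω) (X y ω) ≤
              dist (X x ω) (X e.2.1 ω) + dist (X e.2.1 ω) (X y ω) := dist_triangle _ _ _
          have h4 : dist (X e.2.1 ω) (X y ω) = dist (X y ω) (X e.2.1 ω) := dist_comm _ _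
          linarith
        · -- p = min, p' = max : good orientation
          subst hp1; subst hq2
          exact ⟨(hbd _ hb).1, by linarith⟩
      · rcases hpor' with hq1 | hq2
        · -- p = max, p' = min : bad orientation, contradict hA via triple (x, y, max)
          exfalso
          subst hp2; subst hq1
          have hyb : dist (X y ω) (X e.2.2 ω) ≥ lam - lam/4 := by
            have h3 : dist (X x ω) (X y ω) ≤
                dist (X x ω) (X e.2.2 ω) + dist (X e.2.2 ω) (X y ω) := dist_triangle _ _ _
            have h4 : dist (X e.2.2 ω) (X y ω) = dist (X y ω) (X e.2.2 ω) := dist_comm _ _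
            linarith
          refine hA e he ⟨x, hx, y, hy, e.2.2, hb, hxy, (hbd y hy).2, le_min ?_ ?_⟩
          · linarith
          · linarith
        · -- both attached to max pole : contradiction
          exfalso
          subst hp2; subst hq2
          have h3 : dist (X x ω) (X y ω) ≤
              dist (X x ω) (X e.2.2 ω) + dist (X e.2.2 ω) (X y ω) := dist_triangle _ _ _
          have h4 : dist (X e.2.2 ω) (X y ω) = dist (X y ω) (X e.2.2 ω) := dist_comm _ _
          linarith
    · -- different blocks
      refine ⟨(hlt p hpmem p' hpmem').le, by linarith⟩
  -- main argument
  obtain ⟨x, hx, y, hy, z, hz, hxy, hyz, hmin⟩ := hω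
  rw [le_min_iff] at hmin
  obtain ⟨hd1, hd2⟩ := hmin
  obtain ⟨ex, hex, hxex⟩ := hcov x hx
  obtain ⟨ey, hey, hyey⟩ := hcov y hy
  obtain ⟨ez, hez, hzez⟩ := hcov z hz
  obtain ⟨px, hpx, hdx⟩ := hatt ex hex x hxex
  obtain ⟨py, hpy, hdy⟩ := hatt ey hey y hyey
  obtain ⟨pz, hpz, hdz⟩ := hatt ez hez z hzez
  obtain ⟨h12, hD12⟩ := hpair ex hex ey hey x hxex y hyey px py hpx hpy hdx hdy hxy hd1
  obtain ⟨h23, hD23⟩ := hpair ey hey ez hez y hyey z hzez py pz hpy hpz hdy hdz hyz hd2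
  have hmempx : px ∈ poles Bs := by
    rw [poles, List.mem_flatMap]
    exact ⟨ex, hex, by rcases hpx with h | h <;> simp [h]⟩
  have hmempy : py ∈ poles Bs := by
    rw [poles, List.mem_flatMap]
    exact ⟨ey, hey, by rcases hpy with h | h <;> simp [h]⟩
  have hmempz : pz ∈ poles Bs := by
    rw [poles, List.mem_flatMap]
    exact ⟨ez, hez, by rcases hpz with h | h <;> simp [h]⟩
  exact hB px hmempx py hmempy pz hmempz ⟨h12, h23, le_min hD12 hD23⟩



lemma decomp_ex' (hT : MeasurableSet T) (m : ℕ) :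
    ∀ (J : Finset ℝ) (hne : J.Nonempty),
    ∃ Bs : List Entry,
      (∀ e ∈ Bs, e.1.Nonempty ∧ e.1 ⊆ J ∧ e.2.1 ∈ e.1 ∧ e.2.2 ∈ e.1 ∧
          (∀ x ∈ e.1, e.2.1 ≤ x ∧ x ≤ e.2.2)) ∧
      (∀ x ∈ J, ∃ e ∈ Bs, x ∈ e.1) ∧
      Bs.Pairwise (fun e e' => ∀ x ∈ e.1, ∀ y ∈ e'.1, x < y) ∧
      Bs.length ≤ 2 ^ m ∧
      (∀ e ∈ Bs, sUU μ T e.2.1 e.2.2 ≤ sUU μ T (J.min' hne) (J.max' hne) / 2 ^ m) ∧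
      (1 ≤ m → 2 ≤ J.card → ∀ e ∈ Bs, e.1.card < J.card) := by
  induction m with
  | zero =>
    intro J hne
    refine ⟨[(J, J.min' hne, J.max' hne)], ?_, ?_, ?_, ?_, ?_, ?_⟩
    · rintro e he
      simp only [List.mem_singleton] at he
      subst he
      exact ⟨hne, subset_rfl, J.min'_mem hne, J.max'_mem hne,
        fun x hx => ⟨J.min'_le x hx, J.le_max' x hx⟩⟩
    · intro x hx; exact ⟨_, List.mem_singleton.mpr rfl, hx⟩
    · simp
    · simp
    · rintro e he
      simp only [List.mem_singleton] at he
      subst he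
      simp
    · intro h; omega
  | succ m ih =>
    intro J hne
    by_cases hc : 2 ≤ J.card
    · obtain ⟨B₁, B₂, h₁, h₂, hne', hs₁, hs₂, hcov, hsep, hcard₁, hcard₂, hm₁, hm₂⟩ :=
        split_ex (μ := μ) hT J hc
      obtain ⟨Bs₁, e₁props, e₁cov, e₁pw, e₁len, e₁mass, _⟩ := ih B₁ h₁
      obtain ⟨Bs₂, e₂props, e₂cov, e₂pw, e₂len, e₂mass, _⟩ := ih B₂ h₂
      refine ⟨Bs₁ ++ Bs₂, ?_, ?_, ?_, ?_, ?_, ?_⟩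
      · intro e he
        rcases List.mem_append.mp he with h | h
        · obtain ⟨hne0, hsub, h3, h4, h5⟩ := e₁props e h
          exact ⟨hne0, hsub.trans hs₁, h3, h4, h5⟩
        · obtain ⟨hne0, hsub, h3, h4, h5⟩ := e₂props e h
          exact ⟨hne0, hsub.trans hs₂, h3, h4, h5⟩
      · intro x hx
        rcases hcov x hx with h | h
        · obtain ⟨e, he, hxe⟩ := e₁cov x h
          exact ⟨e, List.mem_append.mpr (Or.inl he), hxe⟩
        · obtain ⟨e, he, hxe⟩ := e₂cov x h
          exact ⟨e, List.mem_append.mpr (Or.inr he), hxe⟩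
      · rw [List.pairwise_append]
        refine ⟨e₁pw, e₂pw, ?_⟩
        intro e he e' he' x hx y hy
        exact hsep x ((e₁props e he).2.1 hx) y ((e₂props e' he').2.1 hy)
      · rw [List.length_append]
        have : 2 ^ (m + 1) = 2 ^ m + 2 ^ m := by ring
        omega
      · intro e he
        rcases List.mem_append.mp he with h | h
        · refine le_trans (e₁mass e h) ?_
          calc sUU μ T (B₁.min' h₁) (B₁.max' h₁) / 2 ^ m
              ≤ (sUU μ T (J.min' hne) (J.max' hne) / 2) / 2 ^ m := by
                gcongr

            _ = sUU μ T (J.min' hne) (J.max' hne) / 2 ^ (m + 1) := by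
                rw [pow_succ]; ring
        · refine le_trans (e₂mass e h) ?_
          calc sUU μ T (B₂.min' h₂) (B₂.max' h₂) / 2 ^ m
              ≤ (sUU μ T (J.min' hne) (J.max' hne) / 2) / 2 ^ m := by
                gcongr

            _ = sUU μ T (J.min' hne) (J.max' hne) / 2 ^ (m + 1) := by
                rw [pow_succ]; ring
      · intro _ _ e he
        rcases List.mem_append.mp he with h | h
        · exact lt_of_le_of_lt (Finset.card_le_card ((e₁props e h).2.1)) hcard₁
        · exact lt_of_le_of_lt (Finset.card_le_card ((e₂props e h).2.1)) hcard₂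
    · -- singleton
      refine ⟨[(J, J.min' hne, J.max' hne)], ?_, ?_, ?_, ?_, ?_, ?_⟩
      · rintro e he
        simp only [List.mem_singleton] at he
        subst he
        exact ⟨hne, subset_rfl, J.min'_mem hne, J.max'_mem hne,
          fun x hx => ⟨J.min'_le x hx, J.le_max' x hx⟩⟩
      · intro x hx; exact ⟨_, List.mem_singleton.mpr rfl, hx⟩
      · simp
      · simp
        exact Nat.one_le_two_pow
      · rintro e he
        simp only [List.mem_singleton] at he
        subst he
        have hcard1 : J.card = 1 := by
          have := Finset.card_pos.mpr hne; omega
        obtain ⟨x, hx⟩ := Finset.card_eq_one.mp hcard1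
        subst hx
        simp only [Finset.min'_singleton, Finset.max'_singleton]
        rw [sUU_self]
        positivity
      · intro _ h2; omega


/-- the splitting depth -/
def mm (α β : ℝ) : ℕ := max 1 ⌈(8*β+1)/(2*α-1)⌉₊

/-- the constant -/
def KK (α β : ℝ) : ℝ := 2^(3 * mm α β + 4) * (2:ℝ)^((4:ℝ)*β)

lemma KK_pos (α β : ℝ) : 0 < KK α β := by
  unfold KK
  positivity

lemma rpow_quarter {lam : ℝ} (hlam : 0 < lam) (β : ℝ) :
    (lam/4) ^ (-(4*β)) = (2:ℝ)^((8:ℝ)*β) * lam ^ (-(4*β)) := by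
  have h48 : (4:ℝ)^((4:ℝ)*β) = (2:ℝ)^((8:ℝ)*β) := by
    have h4 : (4:ℝ) = (2:ℝ)^(2:ℝ) := by
      rw [show (2:ℝ) = ((2:ℕ):ℝ) by norm_num, Real.rpow_natCast]; norm_num
    rw [h4, ← Real.rpow_mul (by norm_num)]
    congr 1
    rw [← h4]
    ring
  rw [div_eq_mul_inv, Real.mul_rpow hlam.le (by norm_num),
    Real.inv_rpow (by norm_num), ← Real.rpow_neg (by norm_num), neg_neg, h48, mul_comm]

lemma rpow_half {lam : ℝ} (hlam : 0 < lam) (β : ℝ) :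
    (lam/2) ^ (-(4*β)) = (2:ℝ)^((4:ℝ)*β) * lam ^ (-(4*β)) := by
  rw [div_eq_mul_inv, Real.mul_rpow hlam.le (by norm_num),
    Real.inv_rpow (by norm_num), ← Real.rpow_neg (by norm_num), neg_neg]
  ring

lemma key1 (α β : ℝ) (hα : 1/2 < α) (hβ : 0 ≤ β) :
    (2:ℝ)^(mm α β) * (2:ℝ)^((8:ℝ)*β) / ((2:ℝ)^(mm α β))^(2*α) ≤ 1/2 := by
  set m := mm α β with hm
  have hmge : (8*β+1)/(2*α-1) ≤ (m : ℝ) := by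
    refine le_trans (Nat.le_ceil _) ?_
    exact_mod_cast Nat.le_max_right 1 ⌈(8*β+1)/(2*α-1)⌉₊
  have h2a : (0:ℝ) < 2*α - 1 := by linarith
  have hineq : 8*β + 1 ≤ (m:ℝ) * (2*α - 1) := by
    rw [div_le_iff₀ h2a] at hmge
    linarith
  have hcast : ((2:ℝ)^m) = (2:ℝ)^((m:ℕ):ℝ) := (Real.rpow_natCast 2 m).symm
  rw [hcast, ← Real.rpow_mul (by norm_num : (0:ℝ) ≤ 2),
    ← Real.rpow_add (by norm_num : (0:ℝ) < 2), div_eq_mul_inv,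
    ← Real.rpow_neg (by norm_num : (0:ℝ) ≤ 2),
    ← Real.rpow_add (by norm_num : (0:ℝ) < 2)]
  have hhalf : (1:ℝ)/2 = (2:ℝ)^(-1:ℝ) := by
    rw [Real.rpow_neg_one]; norm_num
  rw [hhalf, Real.rpow_le_rpow_left_iff (by norm_num : (1:ℝ) < 2)]
  nlinarith [hineq]

lemma key2 (α β : ℝ) (hβ : 0 ≤ β) {N : ℝ} (hN0 : 0 ≤ N)
    (hNle : N ≤ ((2:ℝ)^(mm α β + 1))^3) :
    N * (2:ℝ)^((4:ℝ)*β) ≤ KK α β / 2 := by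
  have h1 : ((2:ℝ)^(mm α β + 1))^3 = 2^(3 * mm α β + 3) := by
    rw [← pow_mul]; ring_nf
  have h2 : KK α β / 2 = 2^(3 * mm α β + 3) * (2:ℝ)^((4:ℝ)*β) := by
    unfold KK
    rw [pow_succ]
    ring
  rw [h2]
  refine mul_le_mul_of_nonneg_right ?_ (by positivity)
  rw [← h1]; exact hNle

lemma main_real_ineq (α β : ℝ) (hα : 1/2 < α) (hβ : 0 ≤ β) {u lam N : ℝ}
    (hu : 0 ≤ u) (hlam : 0 < lam) (hN0 : 0 ≤ N) (hNle : N ≤ ((2:ℝ)^(mm α β + 1))^3) :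
    (2:ℝ)^(mm α β) * (KK α β * ((lam/4) ^ (-(4*β))) * ((u / 2^(mm α β)) ^ (2*α))) +
      N * (((lam/2) ^ (-(4*β))) * (u ^ (2*α))) ≤
      KK α β * lam ^ (-(4*β)) * u ^ (2*α) := by
  set m := mm α β with hm
  have hL : (0:ℝ) ≤ lam ^ (-(4*β)) := Real.rpow_nonneg hlam.le _
  have hU : (0:ℝ) ≤ u ^ (2*α) := Real.rpow_nonneg hu _
  have hdiv : (u / 2^m) ^ (2*α) = u ^ (2*α) / ((2:ℝ)^m) ^ (2*α) :=
    Real.div_rpow hu (by positivity) _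
  rw [hdiv, rpow_quarter hlam, rpow_half hlam]
  have hpow : (0:ℝ) < ((2:ℝ)^m) ^ (2*α) := Real.rpow_pos_of_pos (by positivity) _
  have e1 : (2:ℝ)^m * (KK α β * ((2:ℝ)^((8:ℝ)*β) * lam ^ (-(4*β))) *
      (u ^ (2*α) / ((2:ℝ)^m) ^ (2*α))) =
      ((2:ℝ)^m * (2:ℝ)^((8:ℝ)*β) / ((2:ℝ)^m)^(2*α)) *
      (KK α β * (lam ^ (-(4*β)) * u ^ (2*α))) := by
    field_simp
  have e2 : N * ((2:ℝ)^((4:ℝ)*β) * lam ^ (-(4*β)) * u ^ (2*α)) =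
      (N * (2:ℝ)^((4:ℝ)*β)) * (lam ^ (-(4*β)) * u ^ (2*α)) := by ring
  rw [e1, e2]
  have hk1 := key1 α β hα hβ
  have hk2 := key2 α β hβ hN0 hNle
  have hKLU : (0:ℝ) ≤ KK α β * (lam ^ (-(4*β)) * u ^ (2*α)) := by
    have := (KK_pos α β).le
    positivity
  have hLU : (0:ℝ) ≤ lam ^ (-(4*β)) * u ^ (2*α) := by positivity
  have t1 : ((2:ℝ)^m * (2:ℝ)^((8:ℝ)*β) / ((2:ℝ)^m)^(2*α)) *
      (KK α β * (lam ^ (-(4*β)) * u ^ (2*α))) ≤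
      (1/2) * (KK α β * (lam ^ (-(4*β)) * u ^ (2*α))) :=
    mul_le_mul_of_nonneg_right hk1 hKLU
  have t2 : (N * (2:ℝ)^((4:ℝ)*β)) * (lam ^ (-(4*β)) * u ^ (2*α)) ≤
      (KK α β / 2) * (lam ^ (-(4*β)) * u ^ (2*α)) :=
    mul_le_mul_of_nonneg_right hk2 hLU
  nlinarith [t1, t2]

/-- union bound over a list -/
lemma measure_list_biUnion_le {ι : Type*} (P : Measure Ω) (f : ι → Set Ω) (g : ι → ENNReal) :
    ∀ L : List ι, (∀ e ∈ L, P (f e) ≤ g e) → P (⋃ e ∈ L, f e) ≤ (L.map g).sum := by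
  intro L
  induction L with
  | nil => simp
  | cons a l ih =>
    intro h
    have hset : (⋃ e ∈ a :: l, f e) = f a ∪ ⋃ e ∈ l, f e := by
      simp [List.mem_cons, Set.iUnion_or, Set.iUnion_union_distrib]
    rw [hset, List.map_cons, List.sum_cons]
    refine le_trans (measure_union_le _ _) ?_
    exact add_le_add (h a List.mem_cons_self) (ih (fun e he => h e (List.mem_cons_of_mem a he)))


lemma poles_length : ∀ Bs : List Entry, (poles Bs).length = 2 * Bs.length := by
  intro Bs
  induction Bs with
  | nil => simp [poles]
  | cons e tl ih =>
    simp only [poles] at ih ⊢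
    rw [List.flatMap_cons, List.length_append, ih]
    simp
    omega

variable {Ω : Type} [MeasurableSpace Ω] {S : Type} [MetricSpace S]

lemma finlem {μ : Measure ℝ} [IsFiniteMeasure μ] {T : Set ℝ} (hT : MeasurableSet T)
    (P : Measure Ω) (X : ℝ → Ω → S) (α β : ℝ) (hα : 1/2 < α) (hβ : 0 ≤ β)
    (hH : ∀ lam : ℝ, 0 < lam → ∀ x ∈ T, ∀ y ∈ T, ∀ z ∈ T,
      P (sTri X x y z lam) ≤ ENNReal.ofReal (lam ^ (-(4*β)) * sUU μ T x z ^ (2*α))) :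
    ∀ (n : ℕ) (J : Finset ℝ), J.card ≤ n → ↑J ⊆ T → ∀ lam : ℝ, 0 < lam →
    ∀ hne : J.Nonempty,
    P (sEv X J lam) ≤
      ENNReal.ofReal (KK α β * lam ^ (-(4*β)) * sUU μ T (J.min' hne) (J.max' hne) ^ (2*α)) := by
  intro n
  induction n with
  | zero =>
    intro J hcard _ _ _ hne
    exact absurd (Finset.card_pos.mpr hne) (by omega)
  | succ n ih =>
    intro J hcard hJT lam hlam hne
    by_cases hsmall : J.card ≤ 2
    · -- fewer than 3 points : the event is empty
      have hempty : sEv X J lam = ∅ := by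
        rw [Set.eq_empty_iff_forall_notMem]
        rintro ω ⟨x, hx, y, hy, z, hz, hxy, hyz, hmin⟩
        rw [le_min_iff] at hmin
        obtain ⟨hd1, hd2⟩ := hmin
        have hxy' : x < y := by
          rcases lt_or_eq_of_le hxy with h | h
          · exact h
          · exfalso; subst h; rw [dist_self] at hd1; linarith
        have hyz' : y < z := by
          rcases lt_or_eq_of_le hyz with h | h
          · exact h
          · exfalso; subst h; rw [dist_self] at hd2; linarith
        have hxz : x < z := hxy'.trans hyz'
        have hsub : ({x, y, z} : Finset ℝ) ⊆ J := by
          intro t ht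
          simp only [Finset.mem_insert, Finset.mem_singleton] at ht
          rcases ht with rfl | rfl | rfl <;> assumption
        have hcard3 : ({x, y, z} : Finset ℝ).card = 3 := by
          rw [Finset.card_insert_of_notMem, Finset.card_insert_of_notMem,
            Finset.card_singleton]
          · simp only [Finset.mem_singleton]; exact hyz'.ne
          · simp only [Finset.mem_insert, Finset.mem_singleton]
            push_neg
            exact ⟨hxy'.ne, hxz.ne⟩
        have := Finset.card_le_card hsub
        omega
      rw [hempty, measure_empty]
      exact zero_le
    · have h3 : 3 ≤ J.card := by omega
      classical
      set m := mm α β with hmdef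
      have hm1 : 1 ≤ m := Nat.le_max_left 1 _
      obtain ⟨Bs, hprops, hcov, hsep, hlen, hmass, hproper⟩ := decomp_ex' (μ := μ) hT m J hne
      set a := J.min' hne with hadef
      set b := J.max' hne with hbdef
      set u := sUU μ T a b with hudef
      have hu0 : 0 ≤ u := sUU_nonneg _ _ _ _
      have hsubset := claim (X := X) hlam Bs J
        (fun e he => ⟨(hprops e he).2.2.1, (hprops e he).2.2.2.1, (hprops e he).2.2.2.2⟩)
        hcov hsep
      -- per-block bound from the induction hypothesis
      have hblock : ∀ e ∈ Bs, P (sEv X e.1 (lam/4)) ≤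
          ENNReal.ofReal (KK α β * ((lam/4) ^ (-(4*β))) * ((u / 2^m) ^ (2*α))) := by
        intro e he
        obtain ⟨hne_e, hsubJ, hmem1, hmem2, hbd⟩ := hprops e he
        have hcardlt : e.1.card < J.card := hproper hm1 (by omega) e he
        have hcardle : e.1.card ≤ n := by omega
        have hmin'eq : e.1.min' hne_e = e.2.1 :=
          le_antisymm (Finset.min'_le _ _ hmem1)
            (Finset.le_min' _ _ _ (fun y hy => (hbd y hy).1))
        have hmax'eq : e.1.max' hne_e = e.2.2 :=
          le_antisymm (Finset.max'_le _ _ _ (fun y hy => (hbd y hy).2))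
            (Finset.le_max' _ _ hmem2)
        have hsubT : ↑e.1 ⊆ T := fun x hx => hJT (hsubJ hx)
        have hband := ih e.1 hcardle hsubT (lam/4) (by positivity) hne_e
        rw [hmin'eq, hmax'eq] at hband
        refine le_trans hband (ENNReal.ofReal_le_ofReal ?_)
        have hUe : sUU μ T e.2.1 e.2.2 ≤ u / 2^m := hmass e he
        have hrp : sUU μ T e.2.1 e.2.2 ^ (2*α) ≤ (u / 2^m) ^ (2*α) :=
          Real.rpow_le_rpow (sUU_nonneg _ _ _ _) hUe (by linarith)
        have hKL : (0:ℝ) ≤ KK α β * ((lam/4) ^ (-(4*β))) := by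
          have := (KK_pos α β).le
          have := Real.rpow_nonneg (show (0:ℝ) ≤ lam/4 by positivity) (-(4*β))
          positivity
        exact mul_le_mul_of_nonneg_left hrp hKL
      -- sum over blocks
      have hblocks : P (⋃ e ∈ Bs, sEv X e.1 (lam/4)) ≤
          ENNReal.ofReal ((2:ℝ)^m * (KK α β * ((lam/4) ^ (-(4*β))) * ((u / 2^m) ^ (2*α)))) := by
        set cB := ENNReal.ofReal (KK α β * ((lam/4) ^ (-(4*β))) * ((u / 2^m) ^ (2*α))) with hcB
        refine le_trans (measure_list_biUnion_le P _ (fun _ => cB) Bs hblock) ?_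
        have h1 : (Bs.map (fun _ => cB)).sum ≤ (Bs.map (fun _ => cB)).length • cB := by
          refine List.sum_le_card_nsmul _ cB ?_
          intro x hx
          rcases List.mem_map.mp hx with ⟨e, _, rfl⟩
          exact le_rfl
        refine le_trans h1 ?_
        rw [List.length_map, nsmul_eq_mul]
        have h2 : (Bs.length : ENNReal) ≤ ((2^m : ℕ) : ENNReal) := by
          exact_mod_cast hlen
        refine le_trans (mul_le_mul_left h2 cB) ?_
        have h4 : ((2^m : ℕ) : ENNReal) = ENNReal.ofReal ((2:ℝ)^m) := by
          rw [ENNReal.ofReal_pow (by norm_num : (0:ℝ) ≤ 2)]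
          norm_num
        rw [h4, hcB, ← ENNReal.ofReal_mul (by positivity)]
      -- pole bound
      set pf := (poles Bs).toFinset with hpf
      have hpolemem : ∀ p ∈ pf, p ∈ J := by
        intro p hp
        rw [hpf, List.mem_toFinset, poles, List.mem_flatMap] at hp
        obtain ⟨e, he, hpe⟩ := hp
        obtain ⟨hne_e, hsubJ, hmem1, hmem2, hbd⟩ := hprops e he
        simp only [List.mem_cons, List.mem_singleton, List.not_mem_nil, or_false] at hpe
        rcases hpe with rfl | rfl
        · exact hsubJ hmem1
        · exact hsubJ hmem2
      have hpole : ∀ p ∈ pf, ∀ q ∈ pf, ∀ r ∈ pf,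
          P (sTri X p q r (lam/2)) ≤
          ENNReal.ofReal (((lam/2) ^ (-(4*β))) * (u ^ (2*α))) := by
        intro p hp q hq r hr
        have hpJ := hpolemem p hp
        have hqJ := hpolemem q hq
        have hrJ := hpolemem r hr
        by_cases hord : p ≤ q ∧ q ≤ r
        · refine le_trans
            (hH (lam/2) (by positivity) p (hJT hpJ) q (hJT hqJ) r (hJT hrJ))
            (ENNReal.ofReal_le_ofReal ?_)
          refine mul_le_mul_of_nonneg_left ?_
            (Real.rpow_nonneg (by positivity) _)
          refine Real.rpow_le_rpow (sUU_nonneg _ _ _ _) ?_ (by linarith)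
          have hur : sUU μ T p r ≤ sUU μ T a r := sUU_mono_left (J.min'_le p hpJ)
          have hur2 : sUU μ T a r ≤ sUU μ T a b := sUU_mono_right (J.le_max' r hrJ)
          exact le_trans hur hur2
        · have hvoid : sTri X p q r (lam/2) = ∅ := by
            rw [Set.eq_empty_iff_forall_notMem]
            rintro ω ⟨h1, h2, _⟩
            exact hord ⟨h1, h2⟩
          rw [hvoid, measure_empty]
          exact zero_le
      have hstep : ∀ (f : ℝ → Set Ω) (c : ENNReal), (∀ p ∈ pf, P (f p) ≤ c) →
          P (⋃ p ∈ pf, f p) ≤ (pf.card : ENNReal) * c := by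
        intro f c h
        refine le_trans (measure_biUnion_finset_le pf f) ?_
        refine le_trans (Finset.sum_le_card_nsmul pf _ c h) ?_
        rw [nsmul_eq_mul]
      set c0 := ENNReal.ofReal (((lam/2) ^ (-(4*β))) * (u ^ (2*α))) with hc0
      have hpoles : P (⋃ p ∈ pf, ⋃ q ∈ pf, ⋃ r ∈ pf, sTri X p q r (lam/2)) ≤
          (pf.card : ENNReal) * ((pf.card : ENNReal) * ((pf.card : ENNReal) * c0)) := by
        refine hstep _ _ ?_
        intro p hp
        refine hstep _ _ ?_
        intro q hq
        refine hstep _ _ ?_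
        intro r hr
        exact hpole p hp q hq r hr
      have hcardpf : (pf.card : ℝ) ≤ (2:ℝ)^(m+1) := by
        have h1 : pf.card ≤ (poles Bs).length := (poles Bs).toFinset_card_le
        have h2 : (poles Bs).length = 2 * Bs.length := poles_length Bs
        have h3 : pf.card ≤ 2^(m+1) := by
          have : 2 * Bs.length ≤ 2 * 2^m := by omega
          calc pf.card ≤ 2 * Bs.length := by omega
            _ ≤ 2 * 2^m := this
            _ = 2^(m+1) := by ring
        exact_mod_cast h3
      have hpoles2 : P (⋃ p ∈ pf, ⋃ q ∈ pf, ⋃ r ∈ pf, sTri X p q r (lam/2)) ≤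
          ENNReal.ofReal (((pf.card : ℝ))^3 * (((lam/2) ^ (-(4*β))) * (u ^ (2*α)))) := by
        refine le_trans hpoles ?_
        have hcastpf : ((pf.card : ℕ) : ENNReal) = ENNReal.ofReal ((pf.card : ℝ)) :=
          (ENNReal.ofReal_natCast _).symm
        rw [hcastpf, hc0,
          ← ENNReal.ofReal_mul (Nat.cast_nonneg _),
          ← ENNReal.ofReal_mul (Nat.cast_nonneg _),
          ← ENNReal.ofReal_mul (Nat.cast_nonneg _)]
        exact ENNReal.ofReal_le_ofReal (le_of_eq (by ring))
      -- combine
      have hunionEq : (⋃ p ∈ poles Bs, ⋃ q ∈ poles Bs, ⋃ r ∈ poles Bs,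
          sTri X p q r (lam/2)) = ⋃ p ∈ pf, ⋃ q ∈ pf, ⋃ r ∈ pf, sTri X p q r (lam/2) := by
        simp only [hpf, List.mem_toFinset]
      refine le_trans (measure_mono hsubset) ?_
      refine le_trans (measure_union_le _ _) ?_
      rw [hunionEq]
      refine le_trans (add_le_add hblocks hpoles2) ?_
      have hA0 : (0:ℝ) ≤ (2:ℝ)^m * (KK α β * ((lam/4) ^ (-(4*β))) * ((u / 2^m) ^ (2*α))) := by
        have h1 : (0:ℝ) ≤ (lam/4) ^ (-(4*β)) := Real.rpow_nonneg (by positivity) _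
        have h2 : (0:ℝ) ≤ (u / 2^m) ^ (2*α) :=
          Real.rpow_nonneg (div_nonneg hu0 (by positivity)) _
        have h3 := (KK_pos α β).le
        positivity
      have hB0 : (0:ℝ) ≤ ((pf.card : ℝ))^3 * (((lam/2) ^ (-(4*β))) * (u ^ (2*α))) := by
        have h1 : (0:ℝ) ≤ (lam/2) ^ (-(4*β)) := Real.rpow_nonneg (by positivity) _
        have h2 : (0:ℝ) ≤ u ^ (2*α) := Real.rpow_nonneg hu0 _
        positivity
      rw [← ENNReal.ofReal_add hA0 hB0]
      refine ENNReal.ofReal_le_ofReal ?_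
      have hN0 : (0:ℝ) ≤ ((pf.card : ℝ))^3 := by positivity
      have hNle : ((pf.card : ℝ))^3 ≤ ((2:ℝ)^(m+1))^3 :=
        pow_le_pow_left₀ (Nat.cast_nonneg _) hcardpf 3
      exact main_real_ineq α β hα hβ hu0 hlam hN0 hNle


lemma exists_countable_approx (T : Set ℝ) :
    ∃ D : Set ℝ, D.Countable ∧ D ⊆ T ∧
      (∀ t ∈ T, (∃ δ > 0, T ∩ Ioo t (t + δ) = ∅) → t ∈ D) ∧
      (∀ t δ, 0 < δ → (T ∩ Ioo t (t + δ)).Nonempty →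
        ∃ d ∈ D, d ∈ T ∩ Ioo t (t + δ)) := by
  classical
  -- rational-interval choices
  let pick : ℚ × ℚ → Set ℝ := fun q =>
    if h : (T ∩ Ioo (q.1 : ℝ) (q.2 : ℝ)).Nonempty then {h.choose} else ∅
  have hpick_sub : ∀ q, pick q ⊆ T ∩ Ioo (q.1 : ℝ) (q.2 : ℝ) := by
    intro q x hx
    by_cases h : (T ∩ Ioo (q.1 : ℝ) (q.2 : ℝ)).Nonempty
    · simp only [pick, dif_pos h, mem_singleton_iff] at hx
      subst hx
      exact h.choose_spec
    · simp only [pick, dif_neg h] at hx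
      exact absurd hx (notMem_empty x)
  set D1 := ⋃ q, pick q with hD1
  have hD1count : D1.Countable := by
    refine countable_iUnion (fun q => ?_)
    by_cases h : (T ∩ Ioo (q.1 : ℝ) (q.2 : ℝ)).Nonempty
    · simp only [pick, dif_pos h]
      exact countable_singleton _
    · simp only [pick, dif_neg h]
      exact countable_empty
  -- right-isolated points
  set D2 := {t | t ∈ T ∧ ∃ δ, 0 < δ ∧ T ∩ Ioo t (t + δ) = ∅} with hD2
  have hD2count : D2.Countable := by
    have hex : ∀ t : ℝ, ∃ q : ℚ, t ∈ D2 → (t < (q:ℝ) ∧ ∀ s ∈ T, t < s → (q:ℝ) < s) := by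
      intro t
      by_cases h : t ∈ D2
      · obtain ⟨htT, δ, hδ, hemp⟩ := h
        obtain ⟨q, hq1, hq2⟩ := exists_rat_btwn (show t < t + δ by linarith)
        refine ⟨q, fun _ => ⟨hq1, ?_⟩⟩
        intro s hsT hts
        by_contra hle
        push_neg at hle
        have hs : s ∈ T ∩ Ioo t (t + δ) := ⟨hsT, hts, lt_of_le_of_lt hle hq2⟩
        rw [hemp] at hs
        exact hs
      · exact ⟨0, fun h' => absurd h' h⟩
    choose g hg using hex
    have hinj : Set.InjOn g D2 := by
      intro t ht t' ht' heq
      by_contra hne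
      rcases lt_or_gt_of_ne hne with h | h
      · have h1 := hg t ht
        have h2 := hg t' ht'
        have ha : (g t : ℝ) < t' := h1.2 t' ht'.1 h
        have hb : (g t : ℝ) < (g t' : ℝ) := lt_trans ha h2.1
        rw [heq] at hb
        exact lt_irrefl _ hb
      · have h1 := hg t ht
        have h2 := hg t' ht'
        have ha : (g t' : ℝ) < t := h2.2 t ht.1 h
        have hb : (g t' : ℝ) < (g t : ℝ) := lt_trans ha h1.1
        rw [heq] at hb
        exact lt_irrefl _ hb
    exact countable_of_injective_of_countable_image hinj (Set.to_countable _)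
  refine ⟨D1 ∪ D2, hD1count.union hD2count, ?_, ?_, ?_⟩
  · intro x hx
    rcases hx with hx | hx
    · obtain ⟨s, ⟨q, rfl⟩, hxs⟩ := hx
      exact (hpick_sub q hxs).1
    · exact hx.1
  · intro t ht ⟨δ, hδ, hemp⟩
    exact Or.inr ⟨ht, δ, hδ, hemp⟩
  · intro t δ hδ ⟨x, hxT, hx1, hx2⟩
    obtain ⟨q1, hq11, hq12⟩ := exists_rat_btwn hx1
    obtain ⟨q2, hq21, hq22⟩ := exists_rat_btwn hx2
    have hne : (T ∩ Ioo (q1 : ℝ) (q2 : ℝ)).Nonempty := ⟨x, hxT, hq12, hq21⟩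
    have hd : hne.choose ∈ pick (q1, q2) := by
      simp only [pick, dif_pos hne]
      rfl
    have hdmem := hpick_sub (q1, q2) hd
    refine ⟨hne.choose, Or.inl (mem_iUnion.mpr ⟨(q1, q2), hd⟩), hdmem.1, ?_, ?_⟩
    · exact lt_trans hq11 hdmem.2.1
    · exact lt_trans hdmem.2.2 hq22


end Stmt19Aux
end Stmt19AuxSection

set_option maxHeartbeats 1000000 in
open Stmt19Aux MeasureTheory in
/-- Billingsley-type maximal inequality for random elements of a metric
space indexed by a Borel set `T ⊆ [0,1]`, right-continuous in `t`. -/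
theorem stmt19 (α β : ℝ) (hα : 1 / 2 < α) (hβ : 0 ≤ β) :
    ∃ K : ℝ, 0 < K ∧
      ∀ (S : Type) [MetricSpace S] [MeasurableSpace S] [BorelSpace S]
        (Ω : Type) [MeasurableSpace Ω]
        (P : MeasureTheory.Measure Ω), MeasureTheory.IsProbabilityMeasure P →
      ∀ (T : Set ℝ), MeasurableSet T → T ⊆ Icc 0 1 →
      ∀ (X : ℝ → Ω → S), (∀ t ∈ T, Measurable (X t)) →
        (∀ ω : Ω, ∀ t ∈ T, Filter.Tendsto (fun u => X u ω)
          (nhdsWithin t (T ∩ Ioi t)) (nhds (X t ω))) →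
      ∀ (μ : MeasureTheory.Measure ℝ), MeasureTheory.IsFiniteMeasure μ →
        (∀ lam : ℝ, 0 < lam → ∀ r ∈ T, ∀ s ∈ T, ∀ u ∈ T, r ≤ s → s ≤ u →
          P {ω | lam ≤ min (dist (X r ω) (X s ω)) (dist (X s ω) (X u ω))} ≤
            ENNReal.ofReal (lam ^ (-(4 * β)) * ((μ (T ∩ Ioc r u)).toReal) ^ (2 * α))) →
        ∀ lam : ℝ, 0 < lam →
          P {ω | ∃ r ∈ T, ∃ s ∈ T, ∃ u ∈ T, r ≤ s ∧ s ≤ u ∧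
              lam < min (dist (X r ω) (X s ω)) (dist (X s ω) (X u ω))} ≤
            ENNReal.ofReal (K * lam ^ (-(4 * β)) * ((μ T).toReal) ^ (2 * α)) := by
  refine ⟨KK α β, KK_pos α β, ?_⟩
  intro S _ _ _ Ω _ P _ T hT _ X hXmeas hXrc μ hμfin hHyp lam hlam
  -- hypothesis in `sTri` form
  have hH : ∀ lam' : ℝ, 0 < lam' → ∀ x ∈ T, ∀ y ∈ T, ∀ z ∈ T,
      P (sTri X x y z lam') ≤
        ENNReal.ofReal (lam' ^ (-(4*β)) * sUU μ T x z ^ (2*α)) := by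
    intro lam' hlam' x hx y hy z hz
    by_cases hord : x ≤ y ∧ y ≤ z
    · refine le_trans (measure_mono ?_) (hHyp lam' hlam' x hx y hy z hz hord.1 hord.2)
      intro ω hω
      exact hω.2.2
    · have hvoid : sTri X x y z lam' = ∅ := by
        rw [Set.eq_empty_iff_forall_notMem]
        rintro ω ⟨h1, h2, _⟩
        exact hord ⟨h1, h2⟩
      rw [hvoid, measure_empty]
      exact zero_le
  obtain ⟨D, hDcount, hDsub, hDiso, hDhit⟩ := exists_countable_approx T
  set E := {ω | ∃ r ∈ T, ∃ s ∈ T, ∃ u ∈ T, r ≤ s ∧ s ≤ u ∧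
      lam < min (dist (X r ω) (X s ω)) (dist (X s ω) (X u ω))} with hE
  -- approximate any witness triple by a triple in D
  have happroxD : ∀ ω ∈ E, ∃ r' ∈ D, ∃ s' ∈ D, ∃ u' ∈ D, r' ≤ s' ∧ s' ≤ u' ∧
      lam < min (dist (X r' ω) (X s' ω)) (dist (X s' ω) (X u' ω)) := by
    intro ω hω
    obtain ⟨r, hr, s, hs, u, hu, hrs, hsu, hmin⟩ := hω
    rw [lt_min_iff] at hmin
    obtain ⟨hd1, hd2⟩ := hmin
    set Md := min (dist (X r ω) (X s ω)) (dist (X s ω) (X u ω)) with hMd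
    have hMdlam : lam < Md := lt_min hd1 hd2
    set η := (Md - lam) / 2 with hη'
    have hη : 0 < η := by simp only [hη']; linarith
    have hMd1 : Md ≤ dist (X r ω) (X s ω) := min_le_left _ _
    have hMd2 : Md ≤ dist (X s ω) (X u ω) := min_le_right _ _
    have hrs' : r < s := by
      rcases lt_or_eq_of_le hrs with h | h
      · exact h
      · exfalso; subst h; rw [dist_self] at hd1; linarith
    have hsu' : s < u := by
      rcases lt_or_eq_of_le hsu with h | h
      · exact h
      · exfalso; subst h; rw [dist_self] at hd2; linarith
    have key : ∀ t ∈ T, ∀ δ₀ : ℝ, 0 < δ₀ → ∃ t' ∈ D, t ≤ t' ∧ t' < t + δ₀ ∧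
        dist (X t' ω) (X t ω) < η := by
      intro t ht δ₀ hδ₀
      by_cases hiso : ∃ δ > 0, T ∩ Ioo t (t + δ) = ∅
      · refine ⟨t, hDiso t ht hiso, le_refl t, by linarith, ?_⟩
        rw [dist_self]
        exact hη
      · push_neg at hiso
        have hcont := hXrc ω t ht
        rw [Metric.tendsto_nhdsWithin_nhds] at hcont
        obtain ⟨δ₁, hδ₁, hball⟩ := hcont η hη
        set δ₂ := min δ₀ δ₁ with hδ₂'
        have hδ₂ : 0 < δ₂ := lt_min hδ₀ hδ₁
        have hne2 : (T ∩ Ioo t (t + δ₂)).Nonempty := hiso δ₂ hδ₂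
        obtain ⟨d, hdD, hdT, hdgt, hdlt⟩ := hDhit t δ₂ hδ₂ hne2
        refine ⟨d, hdD, hdgt.le, lt_of_lt_of_le hdlt (by
          simp only [hδ₂', add_le_add_iff_left]; exact min_le_left _ _), ?_⟩
        refine hball ⟨hdT, hdgt⟩ ?_
        rw [Real.dist_eq, abs_of_pos (by linarith)]
        have := min_le_right δ₀ δ₁
        linarith
    obtain ⟨r', hr'D, hrr1, hrr2, hrd⟩ := key r hr (s - r) (by linarith)
    obtain ⟨s', hs'D, hss1, hss2, hsd⟩ := key s hs (u - s) (by linarith)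
    obtain ⟨u', hu'D, huu1, huu2, hud⟩ := key u hu 1 one_pos
    have hor1 : r' ≤ s' := by linarith
    have hor2 : s' ≤ u' := by linarith
    refine ⟨r', hr'D, s', hs'D, u', hu'D, hor1, hor2, lt_min ?_ ?_⟩
    · have htri : dist (X r ω) (X s ω) ≤
          dist (X r ω) (X r' ω) + dist (X r' ω) (X s' ω) + dist (X s' ω) (X s ω) :=
        dist_triangle4 _ _ _ _
      have h1 : dist (X r ω) (X r' ω) < η := by rw [dist_comm]; exact hrd
      have h2 : dist (X s' ω) (X s ω) = dist (X s ω) (X s' ω) := dist_comm _ _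
      have : Md - 2*η = lam := by simp only [hη']; ring
      linarith
    · have htri : dist (X s ω) (X u ω) ≤
          dist (X s ω) (X s' ω) + dist (X s' ω) (X u' ω) + dist (X u' ω) (X u ω) :=
        dist_triangle4 _ _ _ _
      have h1 : dist (X s ω) (X s' ω) = dist (X s' ω) (X s ω) := dist_comm _ _
      have : Md - 2*η = lam := by simp only [hη']; ring
      linarith
  by_cases hDne : D.Nonempty
  · obtain ⟨f, hfD⟩ := hDcount.exists_eq_range hDne
    set F : ℕ → Finset ℝ := fun n => (Finset.range (n+1)).image f with hF
    have hFsubT : ∀ n, ↑(F n) ⊆ T := by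
      intro n x hx
      rw [Finset.coe_image] at hx
      obtain ⟨i, _, rfl⟩ := hx
      exact hDsub (hfD ▸ Set.mem_range_self i)
    have hFne : ∀ n, (F n).Nonempty := by
      intro n
      exact ⟨f 0, Finset.mem_image.mpr ⟨0, Finset.mem_range.mpr (by omega), rfl⟩⟩
    have hEsub : E ⊆ ⋃ n, sEv X (F n) lam := by
      intro ω hω
      obtain ⟨r', hr'D, s', hs'D, u', hu'D, ho1, ho2, hgt⟩ := happroxD ω hω
      rw [hfD] at hr'D hs'D hu'D
      obtain ⟨i, rfl⟩ := hr'D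
      obtain ⟨j, rfl⟩ := hs'D
      obtain ⟨k, rfl⟩ := hu'D
      refine mem_iUnion.mpr ⟨i + j + k, f i, ?_, f j, ?_, f k, ?_, ho1, ho2, le_of_lt hgt⟩
      · exact Finset.mem_image.mpr ⟨i, Finset.mem_range.mpr (by omega), rfl⟩
      · exact Finset.mem_image.mpr ⟨j, Finset.mem_range.mpr (by omega), rfl⟩
      · exact Finset.mem_image.mpr ⟨k, Finset.mem_range.mpr (by omega), rfl⟩
    have hmono : Monotone (fun n => sEv X (F n) lam) := by
      intro n n' hnn' ω hω
      obtain ⟨x, hx, y, hy, z, hz, h1, h2, h3⟩ := hω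
      have hsub : F n ⊆ F n' := by
        refine Finset.image_subset_image ?_
        intro i hi
        rw [Finset.mem_range] at hi ⊢
        omega
      exact ⟨x, hsub hx, y, hsub hy, z, hsub hz, h1, h2, h3⟩
    calc P E ≤ P (⋃ n, sEv X (F n) lam) := measure_mono hEsub
      _ = ⨆ n, P (sEv X (F n) lam) := hmono.directed_le.measure_iUnion
      _ ≤ ENNReal.ofReal (KK α β * lam ^ (-(4 * β)) * ((μ T).toReal) ^ (2 * α)) := by
          refine iSup_le (fun n => ?_)
          refine le_trans (finlem hT P X α β hα hβ hH (F n).card (F n) le_rfl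
            (hFsubT n) lam hlam (hFne n)) (ENNReal.ofReal_le_ofReal ?_)
          have h1 : sUU μ T ((F n).min' (hFne n)) ((F n).max' (hFne n)) ^ (2*α) ≤
              ((μ T).toReal) ^ (2*α) :=
            Real.rpow_le_rpow (sUU_nonneg _ _ _ _) (sUU_le_total _ _) (by linarith)
          have h2 : (0:ℝ) ≤ KK α β * lam ^ (-(4*β)) :=
            mul_nonneg (KK_pos α β).le (Real.rpow_nonneg hlam.le _)
          calc KK α β * lam ^ (-(4*β)) *
                sUU μ T ((F n).min' (hFne n)) ((F n).max' (hFne n)) ^ (2*α)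
              ≤ KK α β * lam ^ (-(4*β)) * ((μ T).toReal) ^ (2*α) :=
                mul_le_mul_of_nonneg_left h1 h2
            _ = KK α β * lam ^ (-(4 * β)) * ((μ T).toReal) ^ (2 * α) := by norm_num
  · -- D empty : then E is empty
    have hEempty : E = ∅ := by
      rw [Set.eq_empty_iff_forall_notMem]
      intro ω hω
      obtain ⟨r', hr'D, _⟩ := happroxD ω hω
      exact hDne ⟨r', hr'D⟩
    rw [hEempty, measure_empty]
    exact zero_le
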